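/- Let n ≥ 4 and let e be the edge ideal of the n-cycle: for 1 ≤ j ≤ n-1, e j is the exponent vector of x_j x_{j+1} (value 1 at j and j+1, else 0), and e n is the exponent vector of x_n x_1. Fix i with 2 ≤ i ≤ n-2 and let J = {1, …, i}. Then: (a) e_J is the exponent vector of x_1 x_2 ⋯ x_{i+1}, and M_J = {1, …, i}; (b) for any finset K of {1,…,n}, e_K = e_J if and only if K ⊆ {1,…,i}, 1 ∈ K, i ∈ K, and the complement {1,…,i} \ K contains no two consecutive integers. -/

import Mathlib

open scoped Classical

/-- `M_J` : the union of all finsets `K` with `e_K = e_J`, where `e_J = J.sup e` is the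
exponent vector of the lcm `f_J`. -/
noncomputable def MJ {n : ℕ} {σ : Type*} (e : Fin n → (σ →₀ ℕ)) (J : Finset (Fin n)) :
    Finset (Fin n) :=
  Finset.sup (Finset.univ.filter fun K : Finset (Fin n) => K.sup e = J.sup e) id

lemma fsup_apply {n : ℕ} (e : Fin n → (Fin n →₀ ℕ)) (K : Finset (Fin n)) (x : Fin n) :
    (K.sup e) x = K.sup (fun k => e k x) := by
  induction K using Finset.cons_induction with
  | empty => rfl
  | cons a s ha ih => simp [Finset.sup_cons, Finsupp.sup_apply, ih]

theorem cycle_edge_ideal_SJ (n : ℕ) (hn : 4 ≤ n)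
    (e : Fin n → (Fin n →₀ ℕ))
    (he : ∀ j : Fin n, e j = Finsupp.single j 1 + Finsupp.single (j + ⟨1, by omega⟩) 1)
    (i : ℕ) (hi1 : 2 ≤ i) (hi2 : i ≤ n - 2)
    (J : Finset (Fin n)) (hJ : J = Finset.univ.filter fun j : Fin n => (j : ℕ) < i) :
    (J.sup e = ∑ j ∈ (Finset.univ.filter fun j : Fin n => (j : ℕ) ≤ i),
        Finsupp.single j 1 ∧
      MJ e J = J) ∧
    ∀ K : Finset (Fin n),
      K.sup e = J.sup e ↔
        K ⊆ J ∧ (⟨0, by omega⟩ : Fin n) ∈ K ∧ (⟨i - 1, by omega⟩ : Fin n) ∈ K ∧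
          ∀ p q : Fin n, p ∈ J \ K → q ∈ J \ K → (p : ℕ) + 1 ≠ (q : ℕ) := by
  have hmemJ : ∀ x : Fin n, x ∈ J ↔ (x : ℕ) < i := by
    intro x; rw [hJ]; simp
  -- pointwise value of e k
  have hev : ∀ k x : Fin n, e k x =
      (if (k : ℕ) = (x : ℕ) then 1 else 0) +
      (if ((k : ℕ) + 1) % n = (x : ℕ) then 1 else 0) := by
    intro k x
    rw [he k]
    rw [Finsupp.add_apply, Finsupp.single_apply, Finsupp.single_apply]
    congr 1
    · by_cases h : (k : ℕ) = (x : ℕ)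
      · rw [if_pos (Fin.ext h), if_pos h]
      · rw [if_neg (fun hh => h (Fin.val_eq_of_eq hh)), if_neg h]
    · have hv : ((k + ⟨1, by omega⟩ : Fin n) : ℕ) = ((k : ℕ) + 1) % n := by
        simp [Fin.add_def]
      by_cases h : ((k : ℕ) + 1) % n = (x : ℕ)
      · rw [if_pos (Fin.ext (hv.trans h)), if_pos h]
      · rw [if_neg (fun hh => h (hv.symm.trans (Fin.val_eq_of_eq hh))), if_neg h]
  -- upper bound for the sup over any subset of J
  have hub : ∀ K : Finset (Fin n), (∀ k ∈ K, (k : ℕ) < i) → ∀ x : Fin n,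
      K.sup (fun j => (e j) x) ≤ if (x : ℕ) ≤ i then 1 else 0 := by
    intro K hK x
    apply Finset.sup_le
    intro k hk
    have hki := hK k hk
    have hmod : ((k : ℕ) + 1) % n = (k : ℕ) + 1 := Nat.mod_eq_of_lt (by omega)
    rw [hev, hmod]
    split_ifs <;> omega
  -- lower bound from a witness
  have hwit : ∀ (K : Finset (Fin n)) (k x : Fin n), k ∈ K →
      ((k : ℕ) = (x : ℕ) ∨ ((k : ℕ) + 1) % n = (x : ℕ)) →
      1 ≤ K.sup (fun j => (e j) x) := by
    intro K k x hk hor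
    refine le_trans ?_ (Finset.le_sup (f := fun j => (e j) x) hk)
    show 1 ≤ (e k) x
    rw [hev]
    rcases hor with h | h <;> split_ifs <;> omega
  -- extraction of a witness from a nonzero sup
  have hex : ∀ (K : Finset (Fin n)) (x : Fin n), K.sup (fun j => (e j) x) ≠ 0 →
      ∃ k ∈ K, (k : ℕ) = (x : ℕ) ∨ ((k : ℕ) + 1) % n = (x : ℕ) := by
    intro K x h
    by_contra hc
    push_neg at hc
    apply h
    apply Nat.le_zero.1
    apply Finset.sup_le
    intro k hk
    rw [hev]
    have := hc k hk
    rw [if_neg this.1, if_neg this.2]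
  have hJsub : ∀ k ∈ J, (k : ℕ) < i := fun k hk => (hmemJ k).1 hk
  -- value of the sup of e over J
  have hF : ∀ x : Fin n, (J.sup e) x = if (x : ℕ) ≤ i then 1 else 0 := by
    intro x
    rw [fsup_apply]
    rcases le_or_gt (x : ℕ) i with hx | hx
    · rw [if_pos hx]
      refine le_antisymm ?_ ?_
      · have := hub J hJsub x; rwa [if_pos hx] at this
      · rcases Nat.eq_or_lt_of_le hx with hxi | hxi
        · refine hwit J ⟨i - 1, by omega⟩ x ((hmemJ _).2 (by show i - 1 < i; omega)) (Or.inr ?_)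
          show ((i - 1) + 1) % n = (x : ℕ)
          rw [Nat.mod_eq_of_lt (by omega)]; omega
        · exact hwit J x x ((hmemJ _).2 hxi) (Or.inl rfl)
    · rw [if_neg (by omega)]
      apply Nat.le_zero.1
      have := hub J hJsub x; rwa [if_neg (by omega)] at this
  -- part (b)
  have hb : ∀ K : Finset (Fin n),
      K.sup e = J.sup e ↔
        K ⊆ J ∧ (⟨0, by omega⟩ : Fin n) ∈ K ∧ (⟨i - 1, by omega⟩ : Fin n) ∈ K ∧
          ∀ p q : Fin n, p ∈ J \ K → q ∈ J \ K → (p : ℕ) + 1 ≠ (q : ℕ) := by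
    intro K
    constructor
    · intro h
      have hpt : ∀ x : Fin n, K.sup (fun k => (e k) x) = if (x : ℕ) ≤ i then 1 else 0 := by
        intro x
        rw [← fsup_apply, h, hF]
      -- K ⊆ J
      have hKJ : K ⊆ J := by
        intro k hk
        rw [hmemJ]
        by_contra hki
        push_neg at hki
        by_cases hk1 : (k : ℕ) + 1 = n
        · have h1 : (1 : ℕ) ≤ K.sup (fun j => (e j) k) := hwit K k k hk (Or.inl rfl)
          rw [hpt k, if_neg (by omega)] at h1
          omega
        · have hlt : (k : ℕ) + 1 < n := by have := k.isLt; omega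
          have h1 : (1 : ℕ) ≤ K.sup (fun j => (e j) (⟨(k : ℕ) + 1, hlt⟩ : Fin n)) :=
            hwit K k ⟨(k : ℕ) + 1, hlt⟩ hk (Or.inr (by
              show ((k : ℕ) + 1) % n = (k : ℕ) + 1
              exact Nat.mod_eq_of_lt hlt))
          rw [hpt ⟨(k : ℕ) + 1, hlt⟩, if_neg (by show ¬((k : ℕ) + 1 ≤ i); omega)] at h1
          omega
      refine ⟨hKJ, ?_, ?_, ?_⟩
      · -- 0 ∈ K
        have h1 : K.sup (fun k => (e k) (⟨0, by omega⟩ : Fin n)) ≠ 0 := by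
          rw [hpt]
          rw [if_pos (by show (0 : ℕ) ≤ i; omega)]
          omega
        obtain ⟨k, hk, hor⟩ := hex K _ h1
        have hki : (k : ℕ) < i := hJsub k (hKJ hk)
        have hmod : ((k : ℕ) + 1) % n = (k : ℕ) + 1 := Nat.mod_eq_of_lt (by omega)
        rw [hmod] at hor
        have hk0 : (k : ℕ) = 0 := by
          rcases hor with h | h
          · exact h
          · exact absurd h (by show ¬((k : ℕ) + 1 = (0 : ℕ)); omega)
        have hkk : k = (⟨0, by omega⟩ : Fin n) := Fin.ext hk0
        exact hkk ▸ hk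
      · -- i - 1 ∈ K
        have h1 : K.sup (fun k => (e k) (⟨i, by omega⟩ : Fin n)) ≠ 0 := by
          rw [hpt]
          rw [if_pos (by show i ≤ i; omega)]
          omega
        obtain ⟨k, hk, hor⟩ := hex K _ h1
        have hki : (k : ℕ) < i := hJsub k (hKJ hk)
        have hmod : ((k : ℕ) + 1) % n = (k : ℕ) + 1 := Nat.mod_eq_of_lt (by omega)
        rw [hmod] at hor
        have hk0 : (k : ℕ) = i - 1 := by
          rcases hor with h | h
          · exact absurd h (by show ¬((k : ℕ) = i); omega)
          · have : (k : ℕ) + 1 = i := h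
            omega
        have hkk : k = (⟨i - 1, by omega⟩ : Fin n) := Fin.ext hk0
        exact hkk ▸ hk
      · -- no two consecutive missing
        intro p q hp hq hpq
        rw [Finset.mem_sdiff] at hp hq
        have hqi : (q : ℕ) < i := hJsub q hq.1
        have h1 : K.sup (fun k => (e k) q) ≠ 0 := by
          rw [hpt, if_pos (by omega)]
          omega
        obtain ⟨k, hk, hor⟩ := hex K _ h1
        have hki : (k : ℕ) < i := hJsub k (hKJ hk)
        have hmod : ((k : ℕ) + 1) % n = (k : ℕ) + 1 := Nat.mod_eq_of_lt (by omega)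
        rw [hmod] at hor
        rcases hor with h | h
        · exact hq.2 (Fin.ext h ▸ hk)
        · have : k = p := Fin.ext (by omega)
          exact hp.2 (this ▸ hk)
    · rintro ⟨hKJ, h0, hi1K, hcons⟩
      have hKi : ∀ k ∈ K, (k : ℕ) < i := fun k hk => hJsub k (hKJ hk)
      apply Finsupp.ext
      intro x
      rw [hF, fsup_apply]
      rcases le_or_gt (x : ℕ) i with hx | hx
      · rw [if_pos hx]
        refine le_antisymm ?_ ?_
        · have := hub K hKi x; rwa [if_pos hx] at this
        · rcases Nat.eq_zero_or_pos (x : ℕ) with hx0 | hxpos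
          · exact hwit K ⟨0, by omega⟩ x h0 (Or.inl (by show (0 : ℕ) = (x : ℕ); omega))
          · rcases Nat.eq_or_lt_of_le hx with hxi | hxi
            · refine hwit K ⟨i - 1, by omega⟩ x hi1K (Or.inr ?_)
              show ((i - 1) + 1) % n = (x : ℕ)
              rw [Nat.mod_eq_of_lt (by omega)]; omega
            · by_cases hxK : x ∈ K
              · exact hwit K x x hxK (Or.inl rfl)
              · by_cases hx'K : (⟨(x : ℕ) - 1, by omega⟩ : Fin n) ∈ K
                · refine hwit K ⟨(x : ℕ) - 1, by omega⟩ x hx'K (Or.inr ?_)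
                  show (((x : ℕ) - 1) + 1) % n = (x : ℕ)
                  rw [Nat.mod_eq_of_lt (by omega)]; omega
                · exfalso
                  have hpJ : (⟨(x : ℕ) - 1, by omega⟩ : Fin n) ∈ J \ K := by
                    rw [Finset.mem_sdiff]
                    exact ⟨(hmemJ _).2 (by show (x : ℕ) - 1 < i; omega), hx'K⟩
                  have hqJ : x ∈ J \ K := by
                    rw [Finset.mem_sdiff]
                    exact ⟨(hmemJ x).2 hxi, hxK⟩
                  exact hcons _ x hpJ hqJ (by show ((x : ℕ) - 1) + 1 = (x : ℕ); omega)
      · rw [if_neg (by omega)]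
        apply Nat.le_zero.1
        have := hub K hKi x; rwa [if_neg (by omega)] at this
  refine ⟨⟨?_, ?_⟩, hb⟩
  · -- J.sup e = sum of singles
    apply Finsupp.ext
    intro x
    rw [hF, Finset.sum_apply']
    have h1 : ∀ j ∈ (Finset.univ.filter fun j : Fin n => (j : ℕ) ≤ i),
        (Finsupp.single j (1 : ℕ)) x = if j = x then 1 else 0 := by
      intro j _; rw [Finsupp.single_apply]
    rw [Finset.sum_congr rfl h1, Finset.sum_ite_eq']
    by_cases hx : (x : ℕ) ≤ i <;> simp [Finset.mem_filter, hx]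
  · -- MJ e J = J
    apply le_antisymm
    · apply Finset.sup_le
      intro K hK
      simp only [Finset.mem_filter] at hK
      exact ((hb K).1 hK.2).1
    · refine Finset.le_sup (f := id) ?_
      simp
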